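/- If a state property system satisfies (A) and the 3-MSP, then the operator p*q := λ{p,q} makes (Σ, *) a projective geometry: (P1) p*p = {p}; (P2) p ∈ p*q; (P3) if p ∈ q*r, r ∈ s*t and p ≠ s, then (p*s) ∩ (q*t) ≠ ∅. -/
import Mathlib


universe u v

/-- A state property system: states, a complete lattice of properties, and
the actuality map `xi` assigning to each state the set of actual properties. -/
structure SPS (σ : Type u) (L : Type v) [CompleteLattice L] where
  xi : σ → Set L
  top_mem : ∀ p, ⊤ ∈ xi p
  bot_not_mem : ∀ p, ⊥ ∉ xi p
  sInf_mem : ∀ (p : σ) (A : Set L), (∀ a ∈ A, a ∈ xi p) ↔ sInf A ∈ xi p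
  le_iff : ∀ a b : L, a ≤ b ↔ ∀ r, a ∈ xi r → b ∈ xi r

variable {σ : Type u} {L : Type v} [CompleteLattice L]

/-- λ{p,q} : the set of superpositions of the pair p, q. -/
def SPS.lamPair (S : SPS σ L) (p q : σ) : Set σ := {s | S.xi p ∩ S.xi q ⊆ S.xi s}

/-- A set is λ-closed if it contains λ{p,q} for each pair of its points. -/
def SPS.lamClosed (S : SPS σ L) (T : Set σ) : Prop :=
  ∀ p ∈ T, ∀ q ∈ T, S.lamPair p q ⊆ T

/-- λ(P) : the intersection of all λ-closed sets containing P. -/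
def SPS.lam (S : SPS σ L) (P : Set σ) : Set σ :=
  ⋂₀ {G | S.lamClosed G ∧ P ⊆ G}

/-- The set of superpositions of a set of states. -/
def SPS.bar (S : SPS σ L) (T : Set σ) : Set σ :=
  {p | (⋂ s ∈ T, S.xi s) ⊆ S.xi p}

/-- Property (A): at least two states and `xi` order-reflecting (injective). -/
def SPS.propA (S : SPS σ L) : Prop :=
  (∃ p q : σ, p ≠ q) ∧ ∀ p q : σ, S.xi p ⊆ S.xi q → p = q

/-- p is a minimal superposition of A. -/
def SPS.minSup (S : SPS σ L) (A : Set σ) (p : σ) : Prop :=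
  p ∈ S.bar A ∧ ∀ Q : Set σ, Q ⊂ A → p ∉ S.bar Q

/-- The minimal superposition principle for a given set A. -/
def SPS.MSPon (S : SPS σ L) (A : Set σ) : Prop :=
  ∀ p : σ, S.minSup A p →
    ∀ S₁ S₂ : Set σ, S₁ ⊂ A → S₂ ⊂ A → S₁ ∩ S₂ = ∅ → S₁ ∪ S₂ = A →
      (S.bar (S₁ ∪ {p}) ∩ S.bar S₂).Nonempty

/-- n-MSP : MSP for all sets of cardinality at most n. -/
def SPS.nMSP (S : SPS σ L) (n : ℕ) : Prop :=
  ∀ A : Set σ, A.Finite → A.ncard ≤ n → S.MSPon A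

/-- f-MSP : MSP for all finite sets. -/
def SPS.fMSP (S : SPS σ L) : Prop := ∀ A : Set σ, A.Finite → S.MSPon A

namespace SPS
variable (S : SPS σ L)

lemma mem_lamPair {p q x : σ} : x ∈ S.lamPair p q ↔ S.xi p ∩ S.xi q ⊆ S.xi x := Iff.rfl

lemma lamClosed_lamPair (p q : σ) : S.lamClosed (S.lamPair p q) := by
  intro a ha b hb x hx l hl
  exact hx ⟨ha hl, hb hl⟩

lemma lam_pair (p q : σ) : S.lam {p, q} = S.lamPair p q := by
  apply subset_antisymm
  · apply Set.sInter_subset_of_mem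
    refine ⟨S.lamClosed_lamPair p q, ?_⟩
    intro x hx
    rcases hx with rfl | rfl
    · exact fun l hl => hl.1
    · exact fun l hl => hl.2
  · intro x hx G hG
    exact hG.1 p (hG.2 (by simp)) q (hG.2 (by simp)) hx

lemma bar_pair (a b : σ) : S.bar {a, b} = S.lamPair a b := by
  unfold SPS.bar SPS.lamPair
  simp [Set.biInter_pair]

lemma bar_mono {T T' : Set σ} (h : T ⊆ T') : S.bar T ⊆ S.bar T' := by
  intro x hx
  exact subset_trans (Set.biInter_subset_biInter_left h) hx

lemma bar_singleton (hA : S.propA) (a : σ) : S.bar {a} = {a} := by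
  have h0 : (⋂ s ∈ ({a} : Set σ), S.xi s) = S.xi a := Set.biInter_singleton a S.xi
  ext x
  constructor
  · intro h
    have h' : (⋂ s ∈ ({a} : Set σ), S.xi s) ⊆ S.xi x := h
    rw [h0] at h'
    exact (hA.2 a x h').symm
  · rintro rfl
    show (⋂ s ∈ ({x} : Set σ), S.xi s) ⊆ S.xi x
    exact h0.le

lemma ssubset_of {A B : Set σ} (h1 : A ⊆ B) {x : σ} (hx : x ∈ B) (hx' : x ∉ A) : A ⊂ B :=
  ⟨h1, fun h => hx' (h hx)⟩

lemma minSup_pair (hA : S.propA) {a b p : σ} (h : S.xi a ∩ S.xi b ⊆ S.xi p)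
    (hpa : p ≠ a) (hpb : p ≠ b) : S.minSup {a, b} p := by
  constructor
  · rw [S.bar_pair]; exact h
  · intro Q hQ hpQ
    obtain ⟨x, hx, hxQ⟩ := Set.exists_of_ssubset hQ
    rcases hx with rfl | rfl
    · have hQb : Q ⊆ {b} := by
        intro y hy
        rcases hQ.1 hy with rfl | rfl
        · exact absurd hy hxQ
        · rfl
      have := S.bar_mono hQb hpQ
      rw [S.bar_singleton hA] at this
      exact hpb this
    · have hQa : Q ⊆ {a} := by
        intro y hy
        rcases hQ.1 hy with rfl | rfl
        · rfl
        · exact absurd hy hxQ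
      have := S.bar_mono hQa hpQ
      rw [S.bar_singleton hA] at this
      exact hpa this

end SPS

theorem stmt5 (S : SPS σ L) (hA : S.propA) (h3 : S.nMSP 3) :
    -- (P1)
    (∀ p : σ, S.lam {p, p} = {p}) ∧
    -- (P2)
    (∀ p q : σ, p ∈ S.lam {p, q}) ∧
    -- (P3)
    (∀ p q r s t : σ, p ∈ S.lam {q, r} → r ∈ S.lam {s, t} → p ≠ s →
      (S.lam {p, s} ∩ S.lam {q, t}).Nonempty) := by
  refine ⟨?_, ?_, ?_⟩
  · intro p
    rw [S.lam_pair]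
    ext x
    simp only [SPS.mem_lamPair, Set.inter_self, Set.mem_singleton_iff]
    constructor
    · intro h; exact (hA.2 p x h).symm
    · rintro rfl; exact subset_rfl
  · intro p q
    rw [S.lam_pair]
    exact fun l hl => hl.1
  · intro p q r s t hpqr hrst hps
    rw [S.lam_pair] at hpqr hrst
    rw [S.lam_pair, S.lam_pair]
    -- hpqr : xi q ∩ xi r ⊆ xi p, hrst : xi s ∩ xi t ⊆ xi r
    by_cases hqt : S.xi q ∩ S.xi t ⊆ S.xi p
    · exact ⟨p, fun l hl => hl.1, hqt⟩
    have hpq : p ≠ q := by rintro rfl; exact hqt fun l hl => hl.1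
    have hpt : p ≠ t := by rintro rfl; exact hqt fun l hl => hl.2
    by_cases hqs : S.xi q ∩ S.xi s ⊆ S.xi p
    · -- 2-MSP on {q, s}
      have hqns : q ≠ s := by
        rintro rfl
        exact hqt fun l hl => hqs ⟨hl.1, hl.1⟩
      have hmin := S.minSup_pair hA hqs hpq hps
      have hcard : ({q, s} : Set σ).ncard ≤ 3 := by
        have h1 := Set.ncard_insert_le q ({s} : Set σ)
        simp [Set.ncard_singleton] at h1 ⊢
        omega
      obtain ⟨x, hx1, hx2⟩ := h3 {q, s} (Set.toFinite _) hcard p hmin {s} {q}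
        (SPS.ssubset_of (by simp) (x := q) (by simp) (by simp [hqns]))
        (SPS.ssubset_of (by simp) (x := s) (by simp) (by simp [Ne.symm hqns]))
        (Set.singleton_inter_eq_empty.mpr (by simp [Ne.symm hqns]))
        (by ext z; simp only [Set.mem_union, Set.mem_singleton_iff, Set.mem_insert_iff]; try tauto)
      rw [Set.union_singleton, S.bar_pair] at hx1
      rw [S.bar_singleton hA] at hx2
      subst hx2
      exact ⟨x, hx1, fun l hl => hl.1⟩
    by_cases hst : S.xi s ∩ S.xi t ⊆ S.xi p
    · -- 2-MSP on {s, t}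
      have hsnt : s ≠ t := by
        rintro rfl
        exact hqs fun l hl => hst ⟨hl.2, hl.2⟩
      have hmin := S.minSup_pair hA hst hps hpt
      have hcard : ({s, t} : Set σ).ncard ≤ 3 := by
        have h1 := Set.ncard_insert_le s ({t} : Set σ)
        simp [Set.ncard_singleton] at h1 ⊢
        omega
      obtain ⟨x, hx1, hx2⟩ := h3 {s, t} (Set.toFinite _) hcard p hmin {s} {t}
        (SPS.ssubset_of (by simp) (x := t) (by simp) (by simp [Ne.symm hsnt]))
        (SPS.ssubset_of (by simp) (x := s) (by simp) (by simp [hsnt]))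
        (Set.singleton_inter_eq_empty.mpr (by simp [hsnt]))
        (by ext z; simp only [Set.mem_union, Set.mem_singleton_iff, Set.mem_insert_iff]; try tauto)
      rw [Set.union_singleton, S.bar_pair] at hx1
      rw [S.bar_singleton hA] at hx2
      subst hx2
      exact ⟨x, hx1, fun l hl => hl.2⟩
    -- main case : 3-MSP on {q, s, t}
    have hkey : S.xi q ∩ (S.xi s ∩ S.xi t) ⊆ S.xi p :=
      fun l hl => hpqr ⟨hl.1, hrst hl.2⟩
    have hqns : q ≠ s := by
      rintro rfl; exact hst fun l hl => hkey ⟨hl.1, hl⟩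
    have hqnt : q ≠ t := by
      rintro rfl; exact hqs fun l hl => hkey ⟨hl.1, hl.2, hl.1⟩
    have hsnt : s ≠ t := by
      rintro rfl; exact hqs fun l hl => hkey ⟨hl.1, hl.2, hl.2⟩
    have hmin : S.minSup {q, s, t} p := by
      constructor
      · intro l hl
        rw [Set.mem_iInter₂] at hl
        exact hkey ⟨hl q (by simp), hl s (by simp), hl t (by simp)⟩
      · intro Q hQ hpQ
        obtain ⟨x, hx, hxQ⟩ := Set.exists_of_ssubset hQ
        rcases hx with rfl | rfl | rfl
        · have hQ' : Q ⊆ {s, t} := by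
            intro y hy
            rcases hQ.1 hy with rfl | rfl | rfl
            · exact absurd hy hxQ
            · exact Or.inl rfl
            · exact Or.inr rfl
          have := S.bar_mono hQ' hpQ
          rw [S.bar_pair] at this
          exact hst this
        · have hQ' : Q ⊆ {q, t} := by
            intro y hy
            rcases hQ.1 hy with rfl | rfl | rfl
            · exact Or.inl rfl
            · exact absurd hy hxQ
            · exact Or.inr rfl
          have := S.bar_mono hQ' hpQ
          rw [S.bar_pair] at this
          exact hqt this
        · have hQ' : Q ⊆ {q, s} := by
            intro y hy
            rcases hQ.1 hy with rfl | rfl | rfl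
            · exact Or.inl rfl
            · exact Or.inr rfl
            · exact absurd hy hxQ
          have := S.bar_mono hQ' hpQ
          rw [S.bar_pair] at this
          exact hqs this
    have hcard : ({q, s, t} : Set σ).ncard ≤ 3 := by
      have h1 := Set.ncard_insert_le q ({s, t} : Set σ)
      have h2 := Set.ncard_insert_le s ({t} : Set σ)
      simp [Set.ncard_singleton] at h1 h2 ⊢
      omega
    obtain ⟨x, hx1, hx2⟩ := h3 {q, s, t} (Set.toFinite _) hcard p hmin {s} {q, t}
      (SPS.ssubset_of (by simp) (x := q) (by simp) (by simp [hqns]))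
      (SPS.ssubset_of (by intro z hz; simp only [Set.mem_singleton_iff, Set.mem_insert_iff] at hz ⊢; tauto)
        (x := s) (by simp) (by simp [Ne.symm hqns, hsnt]))
      (Set.singleton_inter_eq_empty.mpr (by simp [Ne.symm hqns, hsnt]))
      (by ext z; simp only [Set.mem_union, Set.mem_singleton_iff, Set.mem_insert_iff]; try tauto)
    rw [Set.union_singleton, S.bar_pair] at hx1
    rw [S.bar_pair] at hx2
    exact ⟨x, hx1, hx2⟩
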